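/- Let V be a completely distributive quantale, (A, α) and (B, β) (U,V)-graphs, and J : A × B → V a V-relation. Put δ(S,x) = sup{ α(𝔵,x) | 𝔵 ∈ UA with S ∈ 𝔵 } and ζ(T,y) = sup{ β(𝔶,y) | 𝔶 ∈ UB with T ∈ 𝔶 }. Call J U-closed if sup_{𝔶 ∈ UB} (UJ)(𝔵,𝔶) ⊗ β(𝔶,y) ≤ sup_{x ∈ A} α(𝔵,x) ⊗ J(x,y) for all 𝔵 ∈ UA, y ∈ B; U-compact if inf_{S ∈ 𝔵} sup_{s ∈ S} J(s,y) ≤ sup_{x ∈ A} α(𝔵,x) ⊗ J(x,y) for all 𝔵 ∈ UA, y ∈ B; and P-closed if (PJ)(S,T) ⊗ ζ(T,y) ≤ sup_{x ∈ A} δ(S,x) ⊗ J(x,y) for all S ⊆ A, T ⊆ B, y ∈ B. Then: (a) if J is U-closed then J is both U-compact and P-closed; (b) conversely, if (A, α) is a (U,V)-category, U(α ∘ J) = (Uα) ∘ (UJ) as V-relations from U(UA) to UB (where U of a V-relation is given by the ultrafilter extension formula and ∘ is composition of V-relations), and J is U-compact and P-closed, then J is U-closed. -/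

import Mathlib

set_option linter.unusedSectionVars false


section Helpers
variable {V : Type*} [CompletelyDistribLattice V] [Monoid V]

/-- totally below -/
def TB {V : Type*} [CompleteLattice V] (a b : V) : Prop :=
  ∀ S : Set V, b ≤ sSup S → ∃ c ∈ S, a ≤ c

lemma TB_le {a b : V} (h : TB a b) : a ≤ b := by
  obtain ⟨c, hc, hac⟩ := h {b} (by simp)
  simp only [Set.mem_singleton_iff] at hc
  exact hc ▸ hac

lemma le_sSup_TB (b : V) : b ≤ sSup {a | TB a b} := by
  have h1 : b ≤ ⨅ S : {S : Set V // b ≤ sSup S}, ⨆ x : S.1, (x : V) := by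
    refine le_iInf fun S => ?_
    simpa [← sSup_eq_iSup'] using S.2
  rw [iInf_iSup_eq] at h1
  refine h1.trans (iSup_le fun g => le_sSup ?_)
  intro S hS
  exact ⟨(g ⟨S, hS⟩ : V), (g ⟨S, hS⟩).2, iInf_le _ _⟩

lemma sSup_TB (b : V) : sSup {a | TB a b} = b :=
  le_antisymm (sSup_le fun _ ha => TB_le ha) (le_sSup_TB b)

lemma TB_exists {ι : Sort*} {a b : V} (h : TB a b) {f : ι → V} (hb : b ≤ ⨆ i, f i) :
    ∃ i, a ≤ f i := by
  obtain ⟨c, hc, hac⟩ := h (Set.range f) (by rwa [sSup_range])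
  obtain ⟨i, rfl⟩ := hc
  exact ⟨i, hac⟩

lemma mulLeft_mono (hl : ∀ (v : V) (S : Set V), v * sSup S = ⨆ w ∈ S, v * w)
    {a b : V} (h : a ≤ b) (c : V) : c * a ≤ c * b := by
  have hb : c * b = c * sSup {a, b} := by rw [sSup_pair, sup_eq_right.mpr h]
  rw [hb, hl]
  exact le_iSup₂_of_le a (by simp) le_rfl

lemma mulRight_mono (hr : ∀ (v : V) (S : Set V), sSup S * v = ⨆ w ∈ S, w * v)
    {a b : V} (h : a ≤ b) (c : V) : a * c ≤ b * c := by
  have hb : b * c = sSup {a, b} * c := by rw [sSup_pair, sup_eq_right.mpr h]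
  rw [hb, hr]
  exact le_iSup₂_of_le a (by simp) le_rfl

lemma iSup_mul' (hr : ∀ (v : V) (S : Set V), sSup S * v = ⨆ w ∈ S, w * v)
    {ι : Sort*} (f : ι → V) (c : V) : (⨆ i, f i) * c = ⨆ i, f i * c := by
  rw [iSup, hr, iSup_range]

lemma mul_iSup' (hl : ∀ (v : V) (S : Set V), v * sSup S = ⨆ w ∈ S, v * w)
    {ι : Sort*} (f : ι → V) (c : V) : c * (⨆ i, f i) = ⨆ i, c * f i := by
  rw [iSup, hl, iSup_range]

end Helpers



/-- The Barr extension of a `V`-relation `K : X ⇸ Y` to ultrafilters: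
`(UK)(𝔛,𝔜) = inf_{σ ∈ 𝔛, τ ∈ 𝔜} sup_{x ∈ σ, y ∈ τ} K(x,y)`. -/
def Urel {V : Type*} [CompleteLattice V] {X Y : Type*} (K : X → Y → V)
    (𝔛 : Ultrafilter X) (𝔜 : Ultrafilter Y) : V :=
  ⨅ σ : Set X, ⨅ _ : σ ∈ 𝔛, ⨅ τ : Set Y, ⨅ _ : τ ∈ 𝔜, ⨆ x ∈ σ, ⨆ y ∈ τ, K x y

/-- The powerset extension of a `V`-relation:
`(PK)(S,T) = inf_{t ∈ T} sup_{s ∈ S} K(s,t)`. -/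
def Prel {V : Type*} [CompleteLattice V] {X Y : Type*} (K : X → Y → V)
    (S : Set X) (T : Set Y) : V :=
  ⨅ t ∈ T, ⨆ s ∈ S, K s t

/-- The closure relation induced by a convergence relation:
`δ(S,x) = sup { α(𝔵,x) | S ∈ 𝔵 }`. -/
def epsComp {V : Type*} [CompleteLattice V] {X : Type*}
    (α : Ultrafilter X → X → V) (S : Set X) (x : X) : V :=
  ⨆ 𝔵 : Ultrafilter X, ⨆ _ : S ∈ 𝔵, α 𝔵 x

section UrelLemmas
variable {V : Type*} [CompleteLattice V] {X Y : Type*}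

lemma Urel_le (K : X → Y → V) {𝔛 : Ultrafilter X} {𝔜 : Ultrafilter Y}
    {σ : Set X} (hσ : σ ∈ 𝔛) {τ : Set Y} (hτ : τ ∈ 𝔜) :
    Urel K 𝔛 𝔜 ≤ ⨆ x ∈ σ, ⨆ y ∈ τ, K x y := by
  exact (iInf_le _ σ).trans ((iInf_le _ hσ).trans ((iInf_le _ τ).trans (iInf_le _ hτ)))

end UrelLemmas

/-- **Theorem 6.6(b)** of the paper and its converse: for `(U,V)`-graphs
`(A,α)`, `(B,β)` and a `V`-relation `J : A ⇸ B`, if `J` is `U`-closed then `J`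
is `U`-compact and `P`-closed; conversely if `(A,α)` is a `(U,V)`-category,
`U(α ∘ J) = Uα ∘ UJ` and `J` is `U`-compact and `P`-closed then `J` is
`U`-closed. -/
theorem Uclosed_iff_Ucompact_Pclosed {V : Type*} [CompletelyDistribLattice V] [Monoid V]
    (hl : ∀ (v : V) (S : Set V), v * sSup S = ⨆ w ∈ S, v * w)
    (hr : ∀ (v : V) (S : Set V), sSup S * v = ⨆ w ∈ S, w * v)
    {A B : Type*}
    (α : Ultrafilter A → A → V) (hα : ∀ x : A, (1 : V) ≤ α (pure x) x)
    (β : Ultrafilter B → B → V) (hβ : ∀ y : B, (1 : V) ≤ β (pure y) y)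
    (J : A → B → V) :
    ((∀ (𝔵 : Ultrafilter A) (y : B),
        (⨆ 𝔶 : Ultrafilter B, Urel J 𝔵 𝔶 * β 𝔶 y) ≤ ⨆ x, α 𝔵 x * J x y) →
      ((∀ (𝔵 : Ultrafilter A) (y : B),
          (⨅ S : Set A, ⨅ _ : S ∈ 𝔵, ⨆ s ∈ S, J s y) ≤ ⨆ x, α 𝔵 x * J x y) ∧
        (∀ (S : Set A) (T : Set B) (y : B),
          Prel J S T * epsComp β T y ≤ ⨆ x, epsComp α S x * J x y))) ∧
    ((∀ (𝔛 : Ultrafilter (Ultrafilter A)) (x : A),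
        (⨆ 𝔵 : Ultrafilter A, Urel α 𝔛 𝔵 * α 𝔵 x) ≤ α (𝔛.bind id) x) →
      (∀ (𝔛 : Ultrafilter (Ultrafilter A)) (𝔶 : Ultrafilter B),
        Urel (fun 𝔵 y => ⨆ x, α 𝔵 x * J x y) 𝔛 𝔶 =
          ⨆ 𝔵 : Ultrafilter A, Urel α 𝔛 𝔵 * Urel J 𝔵 𝔶) →
      (∀ (𝔵 : Ultrafilter A) (y : B),
        (⨅ S : Set A, ⨅ _ : S ∈ 𝔵, ⨆ s ∈ S, J s y) ≤ ⨆ x, α 𝔵 x * J x y) →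
      (∀ (S : Set A) (T : Set B) (y : B),
        Prel J S T * epsComp β T y ≤ ⨆ x, epsComp α S x * J x y) →
      ∀ (𝔵 : Ultrafilter A) (y : B),
        (⨆ 𝔶 : Ultrafilter B, Urel J 𝔵 𝔶 * β 𝔶 y) ≤ ⨆ x, α 𝔵 x * J x y) := by
  classical
  have hbotl : ∀ v : V, v * ⊥ = ⊥ := by
    intro v; simpa using hl v ∅
  have hbotr : ∀ v : V, ⊥ * v = ⊥ := by
    intro v; simpa using hr v ∅
  constructor
  · -- Part (a)
    intro hU
    constructor
    · -- U-compact
      intro 𝔵 y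
      have h1 : (⨅ S : Set A, ⨅ _ : S ∈ 𝔵, ⨆ s ∈ S, J s y) ≤ Urel J 𝔵 (pure y) := by
        refine le_iInf fun σ => le_iInf fun hσ => le_iInf fun τ => le_iInf fun hτ => ?_
        have hy : y ∈ τ := Ultrafilter.mem_pure.mp hτ
        refine (iInf_le _ σ).trans ((iInf_le _ hσ).trans ?_)
        exact iSup₂_le fun s hs => le_iSup₂_of_le s hs (le_iSup₂_of_le y hy le_rfl)
      calc (⨅ S : Set A, ⨅ _ : S ∈ 𝔵, ⨆ s ∈ S, J s y)
          ≤ Urel J 𝔵 (pure y) := h1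
        _ = Urel J 𝔵 (pure y) * 1 := (mul_one _).symm
        _ ≤ Urel J 𝔵 (pure y) * β (pure y) y := mulLeft_mono hl (hβ y) _
        _ ≤ ⨆ 𝔶 : Ultrafilter B, Urel J 𝔵 𝔶 * β 𝔶 y :=
            le_iSup (fun 𝔶 => Urel J 𝔵 𝔶 * β 𝔶 y) (pure y)
        _ ≤ _ := hU 𝔵 y
    · -- P-closed
      intro S T y
      rcases T.eq_empty_or_nonempty with rfl | hT
      · have hz : epsComp β (∅ : Set B) y = ⊥ := by
          refine le_antisymm (iSup₂_le fun 𝔶 h𝔶 => absurd h𝔶 ?_) bot_le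
          exact Filter.empty_notMem (𝔶 : Filter B)
        rw [hz, hbotl]
        exact bot_le
      rcases S.eq_empty_or_nonempty with rfl | hS
      · have hz : Prel J (∅ : Set A) T = ⊥ := by
          obtain ⟨t₀, ht₀⟩ := hT
          refine le_antisymm ((iInf₂_le t₀ ht₀).trans ?_) bot_le
          simp
        rw [hz, hbotr]
        exact bot_le
      · -- main case
        have hPrel : Prel J S T ≤ ⨆ f : T → S, ⨅ t : T, J (f t : A) (t : B) := by
          have heq : Prel J S T = ⨅ t : T, ⨆ s : S, J (s : A) (t : B) := by
            rw [Prel, iInf_subtype']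
            exact iInf_congr fun t => by rw [iSup_subtype']
          rw [heq, iInf_iSup_eq]
        have key : ∀ (f : T → S) (𝔶 : Ultrafilter B), T ∈ 𝔶 →
            (⨅ t : T, J (f t : A) (t : B)) * β 𝔶 y ≤ ⨆ x, epsComp α S x * J x y := by
          intro f 𝔶 hT𝔶
          obtain ⟨t₀, ht₀⟩ := hT
          set g : B → A := fun b => if h : b ∈ T then (f ⟨b, h⟩ : A) else (f ⟨t₀, ht₀⟩ : A)
            with hg
          set 𝔷 : Ultrafilter A := 𝔶.map g with h𝔷
          have hS𝔷 : S ∈ 𝔷 := by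
            rw [h𝔷, Ultrafilter.mem_map]
            refine Filter.mem_of_superset hT𝔶 fun b hb => ?_
            simp only [hg, Set.mem_preimage, hb, dif_pos]
            exact (f ⟨b, hb⟩).2
          have hUrel : (⨅ t : T, J (f t : A) (t : B)) ≤ Urel J 𝔷 𝔶 := by
            refine le_iInf fun σ => le_iInf fun hσ => le_iInf fun τ => le_iInf fun hτ => ?_
            have hne : (g ⁻¹' σ ∩ τ ∩ T).Nonempty :=
              Ultrafilter.nonempty_of_mem
                (Filter.inter_mem (Filter.inter_mem (Ultrafilter.mem_map.mp hσ) hτ) hT𝔶)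
            obtain ⟨t, ⟨htσ, htτ⟩, htT⟩ := hne
            refine (iInf_le _ ⟨t, htT⟩).trans ?_
            have hgt : g t = (f ⟨t, htT⟩ : A) := by simp [hg, htT]
            refine le_iSup₂_of_le (g t) htσ (le_iSup₂_of_le t htτ ?_)
            rw [hgt]
          calc (⨅ t : T, J (f t : A) (t : B)) * β 𝔶 y
              ≤ Urel J 𝔷 𝔶 * β 𝔶 y := mulRight_mono hr hUrel _
            _ ≤ ⨆ 𝔶' : Ultrafilter B, Urel J 𝔷 𝔶' * β 𝔶' y := le_iSup (fun 𝔶' => Urel J 𝔷 𝔶' * β 𝔶' y) 𝔶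
            _ ≤ ⨆ x, α 𝔷 x * J x y := hU 𝔷 y
            _ ≤ ⨆ x, epsComp α S x * J x y := by
                refine iSup_mono fun x => mulRight_mono hr ?_ _
                exact le_iSup₂_of_le 𝔷 hS𝔷 le_rfl
        calc Prel J S T * epsComp β T y
            ≤ (⨆ f : T → S, ⨅ t : T, J (f t : A) (t : B)) * epsComp β T y :=
              mulRight_mono hr hPrel _
          _ = ⨆ f : T → S, (⨅ t : T, J (f t : A) (t : B)) * epsComp β T y := iSup_mul' hr _ _
          _ ≤ ⨆ x, epsComp α S x * J x y := by
              refine iSup_le fun f => ?_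
              rw [epsComp, mul_iSup' hl]
              refine iSup_le fun 𝔶 => ?_
              rw [mul_iSup' hl]
              exact iSup_le fun hT𝔶 => key f 𝔶 hT𝔶
  · -- Part (b)
    intro hcat hBarr hcomp hpcl 𝔵 y
    refine iSup_le fun 𝔶 => ?_
    set u : V := Urel J 𝔵 𝔶 with hu_def
    set b : V := β 𝔶 y with hb_def
    -- Step B
    have stepB : ∀ v : V, TB v u → ∀ S ∈ 𝔵,
        v * b ≤ ⨆ p : {𝔵' : Ultrafilter A // S ∈ 𝔵'}, ⨆ x, α p.1 x * J x y := by
      intro v hv S hS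
      set T : Set B := {t | v ≤ ⨆ s ∈ S, J s t} with hTdef
      have hT𝔶 : T ∈ 𝔶 := by
        rcases 𝔶.mem_or_compl_mem T with h | h
        · exact h
        · exfalso
          have h1 : u ≤ ⨆ t : (Tᶜ : Set B), ⨆ s ∈ S, J s (t : B) := by
            refine (Urel_le J hS h).trans ?_
            refine iSup₂_le fun s hs => iSup₂_le fun t htc => ?_
            exact le_iSup_of_le ⟨t, htc⟩ (le_iSup₂_of_le s hs le_rfl)
          obtain ⟨t, ht⟩ := TB_exists hv h1
          exact t.2 ht
      have hP : v ≤ Prel J S T := le_iInf₂ fun t ht => ht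
      have hble : b ≤ epsComp β T y := le_iSup₂_of_le 𝔶 hT𝔶 le_rfl
      calc v * b ≤ Prel J S T * b := mulRight_mono hr hP _
        _ ≤ Prel J S T * epsComp β T y := mulLeft_mono hl hble _
        _ ≤ ⨆ x, epsComp α S x * J x y := hpcl S T y
        _ ≤ ⨆ p : {𝔵' : Ultrafilter A // S ∈ 𝔵'}, ⨆ x, α p.1 x * J x y := by
            refine iSup_le fun x => ?_
            rw [epsComp, iSup_mul' hr]
            refine iSup_le fun 𝔵' => ?_
            rw [iSup_mul' hr]
            refine iSup_le fun h => ?_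
            exact le_iSup_of_le ⟨𝔵', h⟩ (le_iSup_of_le x le_rfl)
    -- reduce to v totally below u
    have hu : u = sSup {v | TB v u} := (sSup_TB u).symm
    calc u * b = sSup {v | TB v u} * b := by rw [← hu]
      _ = ⨆ v ∈ {v | TB v u}, v * b := hr _ _
      _ ≤ ⨆ x, α 𝔵 x * J x y := ?_
    refine iSup₂_le fun v hv => ?_
    have hv' : TB v u := hv
    -- reduce to w totally below v * b
    refine (le_sSup_TB (v * b)).trans (sSup_le fun w hw => ?_)
    have hw' : TB w (v * b) := hw
    -- build the ultrafilter 𝔛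
    set Aset : Set A → Set (Ultrafilter A) :=
      fun S => {𝔵' | S ∈ 𝔵' ∧ w ≤ ⨆ x, α 𝔵' x * J x y} with hAset
    have hAne : ∀ S ∈ 𝔵, (Aset S).Nonempty := by
      intro S hS
      obtain ⟨p, hp⟩ := TB_exists hw' (stepB v hv' S hS)
      exact ⟨p.1, p.2, hp⟩
    have hAinter : ∀ (S S' : Set A), Aset (S ∩ S') ⊆ Aset S ∩ Aset S' := by
      intro S S' 𝔷 h𝔷
      exact ⟨⟨Filter.mem_of_superset h𝔷.1 Set.inter_subset_left, h𝔷.2⟩,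
        ⟨Filter.mem_of_superset h𝔷.1 Set.inter_subset_right, h𝔷.2⟩⟩
    set F : Filter (Ultrafilter A) :=
      ⨅ S : {S : Set A // S ∈ 𝔵}, Filter.principal (Aset S.1) with hF
    haveI : Nonempty {S : Set A // S ∈ 𝔵} := ⟨⟨Set.univ, Filter.univ_mem⟩⟩
    haveI hFne : F.NeBot := by
      refine Filter.iInf_neBot_of_directed' ?_ ?_
      · intro S S'
        refine ⟨⟨S.1 ∩ S'.1, Filter.inter_mem S.2 S'.2⟩, ?_, ?_⟩
        · exact Filter.principal_mono.2 fun 𝔷 h𝔷 => (hAinter S.1 S'.1 h𝔷).1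
        · exact Filter.principal_mono.2 fun 𝔷 h𝔷 => (hAinter S.1 S'.1 h𝔷).2
      · intro S
        exact Filter.principal_neBot_iff.mpr (hAne S.1 S.2)
    set 𝔛 : Ultrafilter (Ultrafilter A) := Ultrafilter.of F with h𝔛
    have hA : ∀ S ∈ 𝔵, Aset S ∈ 𝔛 := by
      intro S hS
      have hle : (𝔛 : Filter (Ultrafilter A)) ≤ Filter.principal (Aset S) :=
        (Ultrafilter.of_le F).trans
          (iInf_le (fun S : {S : Set A // S ∈ 𝔵} => Filter.principal (Aset S.1)) ⟨S, hS⟩)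
      exact Filter.le_principal_iff.mp hle
    have hbind : 𝔛.bind id = 𝔵 := by
      refine Ultrafilter.eq_of_le ?_
      intro S hS
      have h1 : {𝔵' : Ultrafilter A | S ∈ 𝔵'} ∈ 𝔛 :=
        Filter.mem_of_superset (hA S hS) fun 𝔷 h𝔷 => h𝔷.1
      show S ∈ Filter.bind (𝔛 : Filter (Ultrafilter A)) fun x => ((id x : Ultrafilter A) : Filter A)
      rw [Filter.mem_bind']
      exact h1
    -- Step F
    have hF2 : w ≤ Urel (fun 𝔵' y' => ⨆ x, α 𝔵' x * J x y') 𝔛 (pure y) := by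
      refine le_iInf fun σ => le_iInf fun hσ => le_iInf fun τ => le_iInf fun hτ => ?_
      have hyτ : y ∈ τ := Ultrafilter.mem_pure.mp hτ
      have hne : (σ ∩ Aset Set.univ).Nonempty :=
        Ultrafilter.nonempty_of_mem (Filter.inter_mem hσ (hA Set.univ Filter.univ_mem))
      obtain ⟨𝔷, h𝔷σ, _, h𝔷w⟩ := hne
      exact h𝔷w.trans (le_iSup₂_of_le 𝔷 h𝔷σ (le_iSup₂_of_le y hyτ le_rfl))
    rw [hBarr 𝔛 (pure y)] at hF2
    refine hF2.trans (iSup_le fun 𝔳 => ?_)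
    have hcompv : Urel J 𝔳 (pure y) ≤ ⨆ x, α 𝔳 x * J x y := by
      refine le_trans ?_ (hcomp 𝔳 y)
      refine le_iInf fun S => le_iInf fun hS => ?_
      refine (Urel_le J hS (Ultrafilter.mem_pure.mpr (Set.mem_singleton y))).trans ?_
      refine iSup₂_le fun s hs => iSup₂_le fun t ht => ?_
      refine le_iSup₂_of_le s hs ?_
      rw [show t = y from ht]
    calc Urel α 𝔛 𝔳 * Urel J 𝔳 (pure y)
        ≤ Urel α 𝔛 𝔳 * ⨆ x, α 𝔳 x * J x y := mulLeft_mono hl hcompv _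
      _ = ⨆ x, Urel α 𝔛 𝔳 * (α 𝔳 x * J x y) := mul_iSup' hl _ _
      _ ≤ ⨆ x, α 𝔵 x * J x y := by
          refine iSup_le fun x => ?_
          rw [← mul_assoc]
          refine le_iSup_of_le x (mulRight_mono hr ?_ _)
          refine le_trans (le_iSup_of_le 𝔳 le_rfl :
            Urel α 𝔛 𝔳 * α 𝔳 x ≤ ⨆ 𝔳' : Ultrafilter A, Urel α 𝔛 𝔳' * α 𝔳' x) ?_
          rw [← hbind]
          exact hcat 𝔛 x
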